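/- Consider the v-directional blow-up system ż = −ACz + Czv − Az² + (1−C)z²v − z³v, v̇ = Bv(1 − zv − Cv), with positive real parameters A, B, C. Its equilibrium points on the line {v = 0} are exactly (0,0) and (−C, 0). The Jacobian matrix at (0,0) has eigenvalues B > 0 and −AC < 0, so (0,0) is a hyperbolic saddle; the Jacobian matrix at (−C, 0) has eigenvalues B > 0 and AC > 0, so (−C, 0) is a hyperbolic unstable node. -/

import Mathlib

noncomputable def Ldiag (a b : ℝ) : ℝ × ℝ →L[ℝ] ℝ × ℝ :=
  (a • ContinuousLinearMap.fst ℝ ℝ ℝ).prod (b • ContinuousLinearMap.snd ℝ ℝ ℝ)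

lemma key (A B C z0 : ℝ) (hc : C * z0 + (1 - C) * (z0 * z0) - z0 * z0 * z0 = 0) :
    HasFDerivAt (fun p : ℝ × ℝ =>
      (-(A * C * p.1) + C * p.1 * p.2 - A * (p.1 * p.1) + (1 - C) * (p.1 * p.1) * p.2
        - p.1 * p.1 * p.1 * p.2,
       B * p.2 * (1 - (p.1 * p.2 + C * p.2))))
      (Ldiag (-(A * C) - 2 * A * z0) B) (z0, 0) := by
  have hz : HasFDerivAt (fun p : ℝ × ℝ => p.1) (ContinuousLinearMap.fst ℝ ℝ ℝ) (z0, 0) :=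
    hasFDerivAt_fst
  have hv : HasFDerivAt (fun p : ℝ × ℝ => p.2) (ContinuousLinearMap.snd ℝ ℝ ℝ) (z0, 0) :=
    hasFDerivAt_snd
  have h1 := ((((hz.const_mul (A * C)).neg.add ((hz.const_mul C).mul hv)).sub
      ((hz.mul hz).const_mul A)).add (((hz.mul hz).const_mul (1 - C)).mul hv)).sub
      (((hz.mul hz).mul hz).mul hv)
  have h2 := (hv.const_mul B).mul ((hasFDerivAt_const (1:ℝ) _).sub
      ((hz.mul hv).add (hv.const_mul C)))
  refine (HasFDerivAt.prodMk h1 h2).congr_fderiv ?_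
  refine ContinuousLinearMap.ext fun x => ?_
  obtain ⟨x1, x2⟩ := x
  simp only [Ldiag, ContinuousLinearMap.prod_apply, ContinuousLinearMap.add_apply,
    ContinuousLinearMap.sub_apply, ContinuousLinearMap.smul_apply,
    ContinuousLinearMap.neg_apply, ContinuousLinearMap.coe_fst',
    ContinuousLinearMap.coe_snd', smul_eq_mul, Prod.mk.injEq, Pi.mul_apply, Pi.sub_apply,
    Pi.add_apply]
  exact ⟨by linear_combination x2 * hc, by ring⟩

lemma Ldiag_eig1 (a b : ℝ) : (Ldiag a b).toLinearMap ((1 : ℝ), (0 : ℝ)) = a • (1, 0) := by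
  simp [Ldiag, Prod.smul_def]

lemma Ldiag_eig2 (a b : ℝ) : (Ldiag a b).toLinearMap ((0 : ℝ), (1 : ℝ)) = b • (0, 1) := by
  simp [Ldiag, Prod.smul_def]

/-- For the v-directional blow-up system
`ż = −ACz + Czv − Az² + (1−C)z²v − z³v`, `v̇ = Bv(1 − zv − Cv)`,
the equilibria on `{v = 0}` are exactly `(0,0)` and `(−C, 0)`; the Jacobian
at `(0,0)` has eigenvalues `B > 0` and `−AC < 0` (hyperbolic saddle), and the
Jacobian at `(−C, 0)` has eigenvalues `B > 0` and `AC > 0`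
(hyperbolic unstable node). -/
theorem stmt_18 (A B C : ℝ) (hA : 0 < A) (hB : 0 < B) (hC : 0 < C)
    (F : ℝ × ℝ → ℝ × ℝ)
    (hF : ∀ z v : ℝ, F (z, v) =
      (-(A * C * z) + C * z * v - A * z ^ 2 + (1 - C) * z ^ 2 * v - z ^ 3 * v,
       B * v * (1 - z * v - C * v))) :
    (∀ z : ℝ, F (z, 0) = (0, 0) ↔ z = 0 ∨ z = -C) ∧
    Module.End.HasEigenvalue (fderiv ℝ F (0, 0)).toLinearMap B ∧
    Module.End.HasEigenvalue (fderiv ℝ F (0, 0)).toLinearMap (-(A * C)) ∧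
    0 < B ∧ -(A * C) < 0 ∧
    Module.End.HasEigenvalue (fderiv ℝ F (-C, 0)).toLinearMap B ∧
    Module.End.HasEigenvalue (fderiv ℝ F (-C, 0)).toLinearMap (A * C) ∧
    0 < A * C := by
  have hFe : F = fun p : ℝ × ℝ =>
      (-(A * C * p.1) + C * p.1 * p.2 - A * (p.1 * p.1) + (1 - C) * (p.1 * p.1) * p.2
        - p.1 * p.1 * p.1 * p.2,
       B * p.2 * (1 - (p.1 * p.2 + C * p.2))) := by
    funext p
    obtain ⟨z, v⟩ := p
    rw [hF z v]
    exact Prod.ext (by ring) (by ring)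
  have hd0 : HasFDerivAt F (Ldiag (-(A * C)) B) (0, 0) := by
    rw [hFe]
    have := key A B C 0 (by ring)
    simpa using this
  have hdC : HasFDerivAt F (Ldiag (A * C) B) (-C, 0) := by
    rw [hFe]
    have := key A B C (-C) (by ring)
    have h : -(A * C) - 2 * A * (-C) = A * C := by ring
    rwa [h] at this
  have hf0 : fderiv ℝ F (0, 0) = Ldiag (-(A * C)) B := hd0.fderiv
  have hfC : fderiv ℝ F (-C, 0) = Ldiag (A * C) B := hdC.fderiv
  have hne1 : ((1 : ℝ), (0 : ℝ)) ≠ 0 := by simp [Prod.ext_iff]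
  have hne2 : ((0 : ℝ), (1 : ℝ)) ≠ 0 := by simp [Prod.ext_iff]
  refine ⟨?_, ?_, ?_, hB, by nlinarith, ?_, ?_, by positivity⟩
  · intro z
    rw [hF z 0]
    constructor
    · intro h
      have h1 : -(A * C * z) + C * z * 0 - A * z ^ 2 + (1 - C) * z ^ 2 * 0 - z ^ 3 * 0 = 0 :=
        congrArg Prod.fst h
    
      have h2 : A * z * (C + z) = 0 := by linarith [h1]; 
      rcases mul_eq_zero.mp h2 with h3 | h3
      · left
        rcases mul_eq_zero.mp h3 with h4 | h4
        · exact absurd h4 (ne_of_gt hA)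
        · exact h4
      · right; linarith
    · rintro (rfl | rfl) <;> exact Prod.ext (by ring) (by ring)
  · rw [hf0]
    exact Module.End.hasEigenvalue_of_hasEigenvector
      ⟨Module.End.mem_eigenspace_iff.mpr (Ldiag_eig2 _ _), hne2⟩
  · rw [hf0]
    exact Module.End.hasEigenvalue_of_hasEigenvector
      ⟨Module.End.mem_eigenspace_iff.mpr (Ldiag_eig1 _ _), hne1⟩
  · rw [hfC]
    exact Module.End.hasEigenvalue_of_hasEigenvector
      ⟨Module.End.mem_eigenspace_iff.mpr (Ldiag_eig2 _ _), hne2⟩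
  · rw [hfC]
    exact Module.End.hasEigenvalue_of_hasEigenvector
      ⟨Module.End.mem_eigenspace_iff.mpr (Ldiag_eig1 _ _), hne1⟩
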